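/- Let (R, ⊕, ≤) be a lattice ordered monoid, and let D = (V, A) be a finite digraph with arc resources (x_a)_{a∈A} in R such that x_C ≥ 0 for every cycle C of D. Then for every vertex v and every v-d path P there exists an elementary v-d path P' with x_{P'} ≤ x_P. -/

import Mathlib

/-- A digraph with vertex set `V` and arc set `A`: each arc has a tail and a head. -/
structure Digraph' (V A : Type*) where
  tail : A → V
  head : A → V

/-- `D.IsPathFrom v w l` : the list of arcs `l` is a path from `v` to `w` in `D`:
the tail of each arc is the head of the previous one (or `v` for the first arc),
and the head of the last arc is `w`; the empty list is the unique path from `v` to `v`. -/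
def Digraph'.IsPathFrom {V A : Type*} (D : Digraph' V A) : V → V → List A → Prop
  | v, w, [] => v = w
  | v, w, a :: l => D.tail a = v ∧ D.IsPathFrom (D.head a) w l

/-- The resource of a path `P = (a₁, …, a_k)` is `x_{a₁} + ⋯ + x_{a_k}` (and `0` for
the empty path). -/
def pathRes {A R : Type*} [AddMonoid R] (x : A → R) (l : List A) : R := (l.map x).sum

/-- A path starting at `v` is elementary if it visits each vertex at most once, i.e.,
the list of visited vertices `v, head a₁, …, head a_k` has no duplicate. -/
def Digraph'.IsElementary {V A : Type*} [DecidableEq V] (D : Digraph' V A)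
    (v : V) (l : List A) : Prop :=
  (v :: l.map D.head).Nodup

section Aux

variable {V A : Type*} (D : Digraph' V A)

lemma path_append_iff (v d : V) (l1 l2 : List A) :
    D.IsPathFrom v d (l1 ++ l2) ↔ ∃ u, D.IsPathFrom v u l1 ∧ D.IsPathFrom u d l2 := by
  induction l1 generalizing v with
  | nil =>
    simp only [List.nil_append]
    constructor
    · intro h; exact ⟨v, rfl, h⟩
    · rintro ⟨u, rfl, h⟩; exact h
  | cons a t ih =>
    simp only [List.cons_append, Digraph'.IsPathFrom, List.append_eq, ih]
    constructor
    · rintro ⟨h1, u, h2, h3⟩; exact ⟨u, ⟨h1, h2⟩, h3⟩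
    · rintro ⟨u, ⟨h1, h2⟩, h3⟩; exact ⟨h1, u, h2, h3⟩

lemma path_endpoint {v w : V} {p : List A} (h : D.IsPathFrom v w p) :
    (v :: p.map D.head).getLast? = some w := by
  induction p generalizing v with
  | nil => cases h; rfl
  | cons a t ih =>
    obtain ⟨-, h2⟩ := h
    simpa [List.getLast?_cons_cons] using ih h2

lemma exists_dup_decomp {α : Type*} {l : List α} (h : ¬ l.Nodup) :
    ∃ (l1 : List α) (a : α) (l2 l3 : List α), l = l1 ++ a :: l2 ++ a :: l3 := by
  induction l with
  | nil => exact absurd List.nodup_nil h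
  | cons b t ih =>
    rw [List.nodup_cons] at h
    push_neg at h
    by_cases hb : b ∈ t
    · obtain ⟨l2, l3, rfl⟩ := List.append_of_mem hb
      exact ⟨[], b, l2, l3, rfl⟩
    · obtain ⟨l1, a, l2, l3, rfl⟩ := ih (h hb)
      exact ⟨b :: l1, a, l2, l3, rfl⟩

lemma map_split {α β : Type*} (f : α → β) {l : List α} {s1 s2 : List β}
    (h : l.map f = s1 ++ s2) :
    ∃ t1 t2, l = t1 ++ t2 ∧ t1.map f = s1 ∧ t2.map f = s2 := by
  induction s1 generalizing l with
  | nil => exact ⟨[], l, rfl, rfl, h⟩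
  | cons b s ih =>
    cases l with
    | nil => simp at h
    | cons a t =>
      simp only [List.map_cons, List.cons_append, List.cons.injEq] at h
      obtain ⟨rfl, h2⟩ := h
      obtain ⟨t1, t2, rfl, h3, h4⟩ := ih h2
      exact ⟨a :: t1, t2, rfl, by simp [h3], h4⟩

/-- If a path is not elementary, it contains a removable cycle. -/
lemma cycle_decomp {v d : V} {l : List A} (hp : D.IsPathFrom v d l)
    (h : ¬ (v :: l.map D.head).Nodup) :
    ∃ (l1 c l2 : List A) (u : V), l = l1 ++ c ++ l2 ∧ c ≠ [] ∧
      D.IsPathFrom v u l1 ∧ D.IsPathFrom u u c ∧ D.IsPathFrom u d l2 := by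
  obtain ⟨m1, u, m2, m3, hm⟩ := exists_dup_decomp h
  cases m1 with
  | nil =>
    -- v = u, l.map head = (m2 ++ [u]) ++ m3
    rw [List.nil_append] at hm
    injection hm with hu hmap
    subst hu
    simp only [List.append_eq] at hmap
    rw [show m2 ++ v :: m3 = (m2 ++ [v]) ++ m3 by simp] at hmap
    obtain ⟨c, l2, rfl, hc, hl2⟩ := map_split D.head hmap
    rw [path_append_iff] at hp
    obtain ⟨w, hpc, hpl2⟩ := hp
    have := path_endpoint D hpc
    rw [hc, show v :: (m2 ++ [v]) = (v :: m2) ++ [v] by simp,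
      List.getLast?_append_cons] at this
    simp only [List.getLast?_singleton, Option.some.injEq] at this
    subst this
    exact ⟨[], c, l2, v, rfl, by rintro rfl; simp at hc, rfl, hpc, hpl2⟩
  | cons b m1' =>
    rw [List.cons_append] at hm
    injection hm with hu hmap
    subst hu
    simp only [List.append_eq] at hmap
    rw [show (m1' ++ u :: m2) ++ (u :: m3) = (m1' ++ [u]) ++ ((m2 ++ [u]) ++ m3) by simp] at hmap
    obtain ⟨l1, rest, rfl, h1, hrest⟩ := map_split D.head hmap
    obtain ⟨c, l2, rfl, hc, hl2⟩ := map_split D.head hrest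
    rw [path_append_iff] at hp
    obtain ⟨w, hpl1, hp'⟩ := hp
    have hw : u = w := by
      have := path_endpoint D hpl1
      rw [h1, show v :: (m1' ++ [u]) = (v :: m1') ++ [u] by simp,
        List.getLast?_append_cons] at this
      simpa using this
    subst hw
    rw [path_append_iff] at hp'
    obtain ⟨w, hpc, hpl2⟩ := hp'
    have hw : u = w := by
      have := path_endpoint D hpc
      rw [hc, show u :: (m2 ++ [u]) = (u :: m2) ++ [u] by simp,
        List.getLast?_append_cons] at this
      simpa using this
    subst hw
    exact ⟨l1, c, l2, u, by simp, by rintro rfl; simp at hc, hpl1, hpc, hpl2⟩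

end Aux

/-- in a lattice ordered monoid, if `x_C ≥ 0` for every cycle `C` of a
finite digraph `D`, then for every vertex `v` and every `v`-`d` path `P` there is an
elementary `v`-`d` path `P'` with `x_{P'} ≤ x_P`. -/


theorem stmt4 {V A R : Type*} [Fintype V] [Fintype A] [DecidableEq V]
    [Lattice R] [AddMonoid R]
    [CovariantClass R R (· + ·) (· ≤ ·)]
    [CovariantClass R R (Function.swap (· + ·)) (· ≤ ·)]
    (D : Digraph' V A) (x : A → R)
    (hcyc : ∀ (u : V) (C : List A), C ≠ [] → D.IsPathFrom u u C → 0 ≤ pathRes x C) :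
    ∀ (v d : V) (l : List A), D.IsPathFrom v d l →
      ∃ l' : List A, D.IsPathFrom v d l' ∧ D.IsElementary v l' ∧
        pathRes x l' ≤ pathRes x l := by
  suffices H : ∀ (n : ℕ) (v d : V) (l : List A), l.length ≤ n → D.IsPathFrom v d l →
      ∃ l' : List A, D.IsPathFrom v d l' ∧ D.IsElementary v l' ∧
        pathRes x l' ≤ pathRes x l by
    intro v d l hp
    exact H l.length v d l le_rfl hp
  intro n
  induction n with
  | zero =>
    intro v d l hl hp
    rw [List.length_eq_zero_iff.mp (Nat.le_zero.mp hl)] at hp ⊢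
    exact ⟨[], hp, by simp [Digraph'.IsElementary], le_rfl⟩
  | succ n ih =>
    intro v d l hl hp
    by_cases he : (v :: l.map D.head).Nodup
    · exact ⟨l, hp, he, le_rfl⟩
    · obtain ⟨l1, c, l2, u, rfl, hc, h1, h2, h3⟩ := cycle_decomp D hp he
      have hlen : (l1 ++ l2).length ≤ n := by
        have := List.length_pos_iff.mpr hc
        simp only [List.length_append] at hl ⊢
        omega
      have hp' : D.IsPathFrom v d (l1 ++ l2) := (path_append_iff D v d l1 l2).mpr ⟨u, h1, h3⟩
      obtain ⟨l', ha, hb, hc'⟩ := ih v d (l1 ++ l2) hlen hp'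
      refine ⟨l', ha, hb, hc'.trans ?_⟩
      have h0 : 0 ≤ pathRes x c := hcyc u c hc h2
      have key : pathRes x l2 ≤ pathRes x c + pathRes x l2 := by
        simpa using add_le_add_left h0 (pathRes x l2)
      have : pathRes x l1 + pathRes x l2 ≤ pathRes x l1 + (pathRes x c + pathRes x l2) :=
        add_le_add_right key _
      simpa [pathRes, add_assoc] using this
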